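/- Let B be a normed ring (so ‖xy‖ ≤ ‖x‖·‖y‖ for all x, y ∈ B). For a real number r ≥ 0 and u : ℤ → B define ‖u‖_r := (∑_{l∈ℤ} (1+|l|^{2r})·‖u_l‖²)^{1/2} ∈ [0,∞]. Let s > 1/2 and s' ≥ 0 be real. Then there exists a constant C > 0, depending only on s and s', such that for all u, v : ℤ → B with ‖u‖_s, ‖u‖_{s'}, ‖v‖_s, ‖v‖_{s'} all finite, the convolution (u⋆v)_l := ∑_{k∈ℤ} u_{l−k}·v_k is absolutely convergent for every l ∈ ℤ and ‖u⋆v‖_{s'} ≤ C·(‖u‖_s·‖v‖_{s'} + ‖u‖_{s'}·‖v‖_s). -/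

import Mathlib

open scoped ENNReal NNReal

namespace Stmt17Aux

lemma two_mul_le_sq_add (x y : ℝ≥0∞) : 2 * (x * y) ≤ x ^ 2 + y ^ 2 := by
  rcases eq_or_ne x ⊤ with hx | hx
  · rcases eq_or_ne y 0 with hy | hy
    · simp [hy]
    · have : x ^ 2 = ⊤ := by simp [hx]
      simp [this]
  rcases eq_or_ne y ⊤ with hy | hy
  · rcases eq_or_ne x 0 with hx0 | hx0
    · simp [hx0]
    · have : y ^ 2 = ⊤ := by simp [hy]
      simp [this]
  lift x to ℝ≥0 using hx
  lift y to ℝ≥0 using hy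
  have h' : (2 : ℝ≥0) * (x * y) ≤ x ^ 2 + y ^ 2 := by
    rw [← NNReal.coe_le_coe]; push_cast
    nlinarith [sq_nonneg ((x:ℝ) - y)]
  exact_mod_cast h'

lemma sq_add_le (x y : ℝ≥0∞) : (x + y) ^ 2 ≤ 2 * (x ^ 2 + y ^ 2) := by
  have := two_mul_le_sq_add x y
  calc (x + y) ^ 2 = x ^ 2 + 2 * (x * y) + y ^ 2 := by ring
    _ ≤ x ^ 2 + (x ^ 2 + y ^ 2) + y ^ 2 := by gcongr
    _ = 2 * (x ^ 2 + y ^ 2) := by ring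

lemma cauchy_schwarz (f g : ℤ → ℝ≥0∞) :
    (∑' k, f k * g k) ^ 2 ≤ (∑' k, f k ^ 2) * (∑' k, g k ^ 2) := by
  have key : 2 * (∑' k, f k * g k) ^ 2 ≤ 2 * ((∑' k, f k ^ 2) * (∑' k, g k ^ 2)) := by
    calc 2 * (∑' k, f k * g k) ^ 2
        = 2 * ((∑' k, f k * g k) * (∑' j, f j * g j)) := by rw [pow_two]
      _ = ∑' k, ∑' j, 2 * ((f k * g j) * (f j * g k)) := by
          rw [← ENNReal.tsum_mul_right, ← ENNReal.tsum_mul_left]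
          refine tsum_congr fun k => ?_
          rw [← ENNReal.tsum_mul_left, ← ENNReal.tsum_mul_left]
          exact tsum_congr fun j => by ring
      _ ≤ ∑' k, ∑' j, ((f k * g j) ^ 2 + (f j * g k) ^ 2) :=
          ENNReal.tsum_le_tsum fun k => ENNReal.tsum_le_tsum fun j =>
            two_mul_le_sq_add _ _
      _ = 2 * ((∑' k, f k ^ 2) * (∑' k, g k ^ 2)) := by
          have h1 : ∀ k : ℤ, ∑' j, ((f k * g j) ^ 2 + (f j * g k) ^ 2)
              = f k ^ 2 * (∑' j, g j ^ 2) + (∑' j, f j ^ 2) * g k ^ 2 := by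
            intro k
            rw [ENNReal.tsum_add, ← ENNReal.tsum_mul_left, ← ENNReal.tsum_mul_right]
            congr 1 <;> exact tsum_congr fun j => by ring
          calc ∑' k, ∑' j, ((f k * g j) ^ 2 + (f j * g k) ^ 2)
              = ∑' k, (f k ^ 2 * (∑' j, g j ^ 2) + (∑' j, f j ^ 2) * g k ^ 2) :=
                tsum_congr h1
            _ = (∑' k, f k ^ 2) * (∑' j, g j ^ 2) + (∑' j, f j ^ 2) * (∑' k, g k ^ 2) := by
                rw [ENNReal.tsum_add, ENNReal.tsum_mul_right, ENNReal.tsum_mul_left]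
            _ = 2 * ((∑' k, f k ^ 2) * (∑' k, g k ^ 2)) := by ring
  exact (ENNReal.mul_le_mul_iff_right two_ne_zero ENNReal.ofNat_ne_top).mp key

lemma tsum_shift (f : ℤ → ℝ≥0∞) (k : ℤ) : (∑' l, f (l - k)) = ∑' l, f l :=
  (Equiv.subRight k).tsum_eq f

lemma tsum_reflect (f : ℤ → ℝ≥0∞) (l : ℤ) : (∑' k, f (l - k)) = ∑' k, f k :=
  (Equiv.subLeft l).tsum_eq f

lemma half_sq (x : ℝ≥0∞) : (x ^ (1/2 : ℝ)) ^ 2 = x := by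
  rw [← ENNReal.rpow_natCast (x ^ (1/2:ℝ)) 2, ← ENNReal.rpow_mul]
  norm_num

lemma young (F g : ℤ → ℝ≥0∞) :
    ∑' l : ℤ, (∑' k : ℤ, F (l - k) * g k) ^ 2 ≤ (∑' k, F k ^ 2) * (∑' k, g k) ^ 2 := by
  have hpt : ∀ l : ℤ, (∑' k : ℤ, F (l - k) * g k) ^ 2
      ≤ (∑' k, F (l - k) ^ 2 * g k) * (∑' k, g k) := by
    intro l
    have h1 : (∑' k : ℤ, F (l - k) * g k)
        = ∑' k : ℤ, (F (l - k) * g k ^ (1/2:ℝ)) * g k ^ (1/2:ℝ) := by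
      refine tsum_congr fun k => ?_
      rw [mul_assoc, ← pow_two, half_sq]
    calc (∑' k : ℤ, F (l - k) * g k) ^ 2
        = (∑' k : ℤ, (F (l - k) * g k ^ (1/2:ℝ)) * g k ^ (1/2:ℝ)) ^ 2 := by rw [h1]
      _ ≤ (∑' k, (F (l - k) * g k ^ (1/2:ℝ)) ^ 2) * (∑' k, (g k ^ (1/2:ℝ)) ^ 2) :=
          cauchy_schwarz _ _
      _ = (∑' k, F (l - k) ^ 2 * g k) * (∑' k, g k) := by
          congr 1 <;> refine tsum_congr fun k => ?_
          · rw [mul_pow, half_sq]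
          · rw [half_sq]
  calc ∑' l : ℤ, (∑' k : ℤ, F (l - k) * g k) ^ 2
      ≤ ∑' l : ℤ, (∑' k, F (l - k) ^ 2 * g k) * (∑' k, g k) := ENNReal.tsum_le_tsum hpt
    _ = (∑' l : ℤ, ∑' k, F (l - k) ^ 2 * g k) * (∑' k, g k) := ENNReal.tsum_mul_right
    _ = (∑' k : ℤ, ∑' l, F (l - k) ^ 2 * g k) * (∑' k, g k) := by rw [ENNReal.tsum_comm]
    _ = (∑' k : ℤ, (∑' l, F (l - k) ^ 2) * g k) * (∑' k, g k) := by
        congr 1; exact tsum_congr fun k => ENNReal.tsum_mul_right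
    _ = (∑' k : ℤ, (∑' l, F l ^ 2) * g k) * (∑' k, g k) := by
        congr 1; exact tsum_congr fun k => by rw [tsum_shift (fun j => F j ^ 2) k]
    _ = (∑' k, F k ^ 2) * (∑' k, g k) ^ 2 := by
        rw [ENNReal.tsum_mul_left]; ring

lemma sqrt_add_le {x y : ℝ} (hx : 0 ≤ x) (hy : 0 ≤ y) :
    Real.sqrt (x + y) ≤ Real.sqrt x + Real.sqrt y := by
  have h : x + y ≤ (Real.sqrt x + Real.sqrt y) ^ 2 := by
    nlinarith [Real.sq_sqrt hx, Real.sq_sqrt hy, Real.sqrt_nonneg x, Real.sqrt_nonneg y]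
  calc Real.sqrt (x + y) ≤ Real.sqrt ((Real.sqrt x + Real.sqrt y) ^ 2) := Real.sqrt_le_sqrt h
    _ = Real.sqrt x + Real.sqrt y := Real.sqrt_sq (by positivity)

lemma rpow_add_le_real {p : ℝ} (hp : 0 ≤ p) {x y : ℝ} (hx : 0 ≤ x) (hy : 0 ≤ y) :
    (x + y) ^ p ≤ 2 ^ p * (x ^ p + y ^ p) := by
  rcases le_total x y with h | h
  · calc (x + y) ^ p ≤ (2 * y) ^ p :=
        Real.rpow_le_rpow (by linarith) (by linarith) hp
      _ = 2 ^ p * y ^ p := Real.mul_rpow (by norm_num) hy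
      _ ≤ 2 ^ p * (x ^ p + y ^ p) := by
          have h1 : (0:ℝ) ≤ x ^ p := Real.rpow_nonneg hx p
          have h2 : (0:ℝ) ≤ (2:ℝ) ^ p := Real.rpow_nonneg (by norm_num) p
          nlinarith
  · calc (x + y) ^ p ≤ (2 * x) ^ p :=
        Real.rpow_le_rpow (by linarith) (by linarith) hp
      _ = 2 ^ p * x ^ p := Real.mul_rpow (by norm_num) hx
      _ ≤ 2 ^ p * (x ^ p + y ^ p) := by
          have h1 : (0:ℝ) ≤ y ^ p := Real.rpow_nonneg hy p
          have h2 : (0:ℝ) ≤ (2:ℝ) ^ p := Real.rpow_nonneg (by norm_num) p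
          nlinarith

lemma peetre {p : ℝ} (hp : 0 ≤ p) {x y z : ℝ} (hx : 0 ≤ x) (hy : 0 ≤ y) (hz : 0 ≤ z)
    (h : x ≤ y + z) :
    Real.sqrt (1 + x ^ (2 * p))
      ≤ 2 ^ p * (Real.sqrt (1 + y ^ (2 * p)) + Real.sqrt (1 + z ^ (2 * p))) := by
  have hq : 0 ≤ 2 * p := by linarith
  have h1 : x ^ (2 * p) ≤ 2 ^ (2 * p) * (y ^ (2 * p) + z ^ (2 * p)) :=
    le_trans (Real.rpow_le_rpow hx h hq) (rpow_add_le_real hq hy hz)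
  have h2p : (1:ℝ) ≤ 2 ^ (2 * p) := Real.one_le_rpow (by norm_num) hq
  have h2 : 1 + x ^ (2 * p) ≤ 2 ^ (2 * p) * ((1 + y ^ (2 * p)) + (1 + z ^ (2 * p))) := by
    nlinarith [Real.rpow_nonneg hy (2*p), Real.rpow_nonneg hz (2*p)]
  have hsq : Real.sqrt ((2:ℝ) ^ (2 * p)) = 2 ^ p := by
    have he : (2:ℝ) ^ (2 * p) = ((2:ℝ) ^ p) ^ 2 := by
      rw [← Real.rpow_natCast ((2:ℝ) ^ p) 2, ← Real.rpow_mul (by norm_num)]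
      norm_num [mul_comm]
    rw [he, Real.sqrt_sq (Real.rpow_nonneg (by norm_num) p)]
  have hA : (0:ℝ) ≤ 1 + y ^ (2 * p) := by positivity
  have hB : (0:ℝ) ≤ 1 + z ^ (2 * p) := by positivity
  calc Real.sqrt (1 + x ^ (2 * p))
      ≤ Real.sqrt (2 ^ (2 * p) * ((1 + y ^ (2 * p)) + (1 + z ^ (2 * p)))) :=
        Real.sqrt_le_sqrt h2
    _ = 2 ^ p * Real.sqrt ((1 + y ^ (2 * p)) + (1 + z ^ (2 * p))) := by
        rw [Real.sqrt_mul (Real.rpow_nonneg (by norm_num) _), hsq]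
    _ ≤ 2 ^ p * (Real.sqrt (1 + y ^ (2 * p)) + Real.sqrt (1 + z ^ (2 * p))) := by
        have hle := sqrt_add_le hA hB
        have h2p' : (0:ℝ) ≤ 2 ^ p := Real.rpow_nonneg (by norm_num) p
        nlinarith

lemma summable_inv_weight {s : ℝ} (hs : 1 / 2 < s) :
    Summable (fun k : ℤ => ((1:ℝ) + |(k:ℝ)| ^ (2 * s))⁻¹) := by
  have hs1 : 1 < 2 * s := by linarith
  have hnat : Summable (fun n : ℕ => ((1:ℝ) + (n:ℝ) ^ (2 * s))⁻¹) := by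
    rw [← summable_nat_add_iff 1]
    have hbase : Summable (fun n : ℕ => 1 / ((n+1:ℕ):ℝ) ^ (2 * s)) :=
      (summable_nat_add_iff (f := fun n : ℕ => 1 / (n:ℝ) ^ (2 * s)) 1).mpr
        (Real.summable_one_div_nat_rpow.mpr hs1)
    apply Summable.of_nonneg_of_le (fun n => by positivity) _ hbase
    intro n
    rw [one_div]
    apply inv_anti₀
    · positivity
    · have h0 : (0:ℝ) ≤ (((n:ℕ)+1:ℕ):ℝ) ^ (2*s) := by positivity
      push_cast
      linarith
  apply Summable.of_nat_of_neg
  · simpa [abs_of_nonneg] using hnat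
  · have habs : ∀ n : ℕ, |((-(n:ℤ) : ℤ):ℝ)| = (n:ℝ) := by intro n; push_cast; simp
    simpa [habs] using hnat

lemma tsum_ofReal_eq {B : Type} [NormedRing B] (w : ℤ → ℝ) (hw : ∀ l, 0 ≤ w l) (x : ℤ → B)
    (h : Summable fun l => w l * ‖x l‖ ^ 2) :
    ∑' l, ENNReal.ofReal (w l) * (‖x l‖₊ : ℝ≥0∞) ^ 2
      = ENNReal.ofReal (∑' l, w l * ‖x l‖ ^ 2) := by
  rw [ENNReal.ofReal_tsum_of_nonneg (fun l => mul_nonneg (hw l) (sq_nonneg _)) h]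
  refine tsum_congr fun l => ?_
  rw [ENNReal.ofReal_mul (hw l), ENNReal.ofReal_pow (norm_nonneg _), ofReal_norm, enorm_eq_nnnorm]

lemma summable_of_ne_top {B : Type} [NormedRing B] (w : ℤ → ℝ) (hw : ∀ l, 0 ≤ w l) (x : ℤ → B)
    (h : (∑' l, ENNReal.ofReal (w l) * (‖x l‖₊ : ℝ≥0∞) ^ 2) ≠ ⊤) :
    Summable fun l => w l * ‖x l‖ ^ 2 := by
  have h2 := ENNReal.summable_toReal h
  refine h2.congr fun l => ?_
  rw [ENNReal.toReal_mul, ENNReal.toReal_ofReal (hw l), ENNReal.toReal_pow,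
    ENNReal.coe_toReal, coe_nnnorm]

lemma norm_tsum_le {B : Type} [NormedRing B] (f : ℤ → B) (h : Summable fun k => ‖f k‖) :
    ‖∑' k, f k‖ ≤ ∑' k, ‖f k‖ := by
  by_cases hf : Summable f
  · have ht : Filter.Tendsto (fun s : Finset ℤ => ‖∑ i ∈ s, f i‖)
        Filter.atTop (nhds ‖∑' k, f k‖) := (hf.hasSum).norm
    refine le_of_tendsto ht (Filter.Eventually.of_forall fun s => ?_)
    exact (norm_sum_le _ _).trans (Summable.sum_le_tsum s (fun i _ => norm_nonneg _) h)
  · rw [tsum_eq_zero_of_not_summable hf, norm_zero]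
    exact tsum_nonneg fun k => norm_nonneg _

end Stmt17Aux

namespace Stmt17Aux

/-- The weight. -/
noncomputable def Wgt (r : ℝ) (l : ℤ) : ℝ≥0∞ := ENNReal.ofReal (1 + |(l:ℝ)| ^ (2 * r))

lemma wgt_nonneg (r : ℝ) (l : ℤ) : (0:ℝ) ≤ 1 + |(l:ℝ)| ^ (2 * r) := by positivity

lemma wgt_pos (r : ℝ) (l : ℤ) : (0:ℝ) < 1 + |(l:ℝ)| ^ (2 * r) := by positivity

lemma peetre_ennreal (s' : ℝ) (hs' : 0 ≤ s') (l k : ℤ) :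
    ENNReal.ofReal (Real.sqrt (1 + |(l:ℝ)| ^ (2 * s')))
      ≤ ENNReal.ofReal ((2:ℝ) ^ s') *
        (ENNReal.ofReal (Real.sqrt (1 + |((l - k : ℤ):ℝ)| ^ (2 * s')))
          + ENNReal.ofReal (Real.sqrt (1 + |(k:ℝ)| ^ (2 * s')))) := by
  have habs : |(l:ℝ)| ≤ |((l - k : ℤ):ℝ)| + |(k:ℝ)| := by
    have hcast : ((l - k : ℤ) : ℝ) = (l:ℝ) - (k:ℝ) := by push_cast; ring
    rw [hcast]
    have h1 : (l:ℝ) = ((l:ℝ) - k) + k := by ring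
    calc |(l:ℝ)| = |((l:ℝ) - k) + k| := by rw [← h1]
      _ ≤ |(l:ℝ) - k| + |(k:ℝ)| := abs_add_le _ _
  have hp := peetre hs' (abs_nonneg ((l:ℝ))) (abs_nonneg _) (abs_nonneg _) habs
  calc ENNReal.ofReal (Real.sqrt (1 + |(l:ℝ)| ^ (2 * s')))
      ≤ ENNReal.ofReal ((2:ℝ) ^ s' * (Real.sqrt (1 + |((l - k : ℤ):ℝ)| ^ (2 * s'))
          + Real.sqrt (1 + |(k:ℝ)| ^ (2 * s')))) := ENNReal.ofReal_le_ofReal hp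
    _ = _ := by
        rw [ENNReal.ofReal_mul (Real.rpow_nonneg (by norm_num) _),
          ENNReal.ofReal_add (Real.sqrt_nonneg _) (Real.sqrt_nonneg _)]

lemma tsum_conv_comm (f G : ℤ → ℝ≥0∞) (l : ℤ) :
    (∑' k : ℤ, f (l - k) * G k) = ∑' k : ℤ, G (l - k) * f k := by
  have h := (Equiv.subLeft l).tsum_eq (fun j : ℤ => f (l - j) * G j)
  rw [← h]
  refine tsum_congr fun k => ?_
  simp [Equiv.subLeft, sub_sub_cancel, mul_comm]

/-- ℓ¹-norm squared bounded by the weighted ℓ²-norm times the mass of inverse weights. -/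
lemma ell1_sq_le (s : ℝ) (h : ℤ → ℝ≥0∞) :
    (∑' k : ℤ, h k) ^ 2
      ≤ (∑' k : ℤ, ENNReal.ofReal (((1:ℝ) + |(k:ℝ)| ^ (2 * s))⁻¹))
          * ∑' k : ℤ, Wgt s k * h k ^ 2 := by
  set τ : ℤ → ℝ≥0∞ := fun l => ENNReal.ofReal (Real.sqrt (1 + |(l:ℝ)| ^ (2 * s))) with hτdef
  have hτsq : ∀ l, τ l ^ 2 = Wgt s l := by
    intro l
    rw [hτdef]
    dsimp only
    rw [← ENNReal.ofReal_pow (Real.sqrt_nonneg _), Real.sq_sqrt (wgt_nonneg s l)]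
    rfl
  have hτ0 : ∀ l, τ l ≠ 0 := fun l =>
    (ENNReal.ofReal_pos.mpr (Real.sqrt_pos.mpr (wgt_pos s l))).ne'
  have hτtop : ∀ l, τ l ≠ ⊤ := fun l => ENNReal.ofReal_ne_top
  have hrw : ∀ k, h k = (τ k)⁻¹ * (τ k * h k) := fun k => by
    rw [← mul_assoc, ENNReal.inv_mul_cancel (hτ0 k) (hτtop k), one_mul]
  calc (∑' k : ℤ, h k) ^ 2 = (∑' k : ℤ, (τ k)⁻¹ * (τ k * h k)) ^ 2 := by
        rw [tsum_congr hrw]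
    _ ≤ (∑' k : ℤ, ((τ k)⁻¹) ^ 2) * (∑' k : ℤ, (τ k * h k) ^ 2) := cauchy_schwarz _ _
    _ = _ := by
        congr 1
        · refine tsum_congr fun k => ?_
          rw [← ENNReal.inv_pow, hτsq k, Wgt, ← ENNReal.ofReal_inv_of_pos (wgt_pos s k)]
        · refine tsum_congr fun k => ?_
          rw [mul_pow, hτsq]

/-- Core tame estimate, purely for `ℝ≥0∞`-valued sequences. -/
lemma core (s s' : ℝ) (hs' : 0 ≤ s') (f g : ℤ → ℝ≥0∞) :
    (∑' l : ℤ, Wgt s' l * (∑' k : ℤ, f (l - k) * g k) ^ 2)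
      ≤ 2 * ENNReal.ofReal ((2:ℝ) ^ s') ^ 2
          * (∑' k : ℤ, ENNReal.ofReal (((1:ℝ) + |(k:ℝ)| ^ (2 * s))⁻¹))
          * ((∑' l, Wgt s' l * f l ^ 2) * (∑' l, Wgt s l * g l ^ 2)
              + (∑' l, Wgt s l * f l ^ 2) * (∑' l, Wgt s' l * g l ^ 2)) := by
  set c0 : ℝ≥0∞ := ENNReal.ofReal ((2:ℝ) ^ s') with hc0def
  set σ : ℤ → ℝ≥0∞ := fun l => ENNReal.ofReal (Real.sqrt (1 + |(l:ℝ)| ^ (2 * s'))) with hσdef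
  have hσsq : ∀ l, σ l ^ 2 = Wgt s' l := by
    intro l
    rw [hσdef]
    dsimp only
    rw [← ENNReal.ofReal_pow (Real.sqrt_nonneg _), Real.sq_sqrt (wgt_nonneg s' l)]
    rfl
  set F : ℤ → ℝ≥0∞ := fun k => σ k * f k with hFdef
  set G : ℤ → ℝ≥0∞ := fun k => σ k * g k with hGdef
  set A : ℝ≥0∞ := ∑' k : ℤ, ENNReal.ofReal (((1:ℝ) + |(k:ℝ)| ^ (2 * s))⁻¹) with hAdef
  have hpt : ∀ l : ℤ, Wgt s' l * (∑' k : ℤ, f (l - k) * g k) ^ 2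
      ≤ c0 ^ 2 * (2 * ((∑' k : ℤ, F (l - k) * g k) ^ 2 + (∑' k : ℤ, G (l - k) * f k) ^ 2)) := by
    intro l
    have e2 : σ l * (∑' k : ℤ, f (l - k) * g k)
        ≤ c0 * ((∑' k : ℤ, F (l - k) * g k) + (∑' k : ℤ, G (l - k) * f k)) := by
      calc σ l * (∑' k : ℤ, f (l - k) * g k) = ∑' k : ℤ, σ l * (f (l - k) * g k) :=
            ENNReal.tsum_mul_left.symm
        _ ≤ ∑' k : ℤ, (c0 * (σ (l - k) + σ k)) * (f (l - k) * g k) :=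
            ENNReal.tsum_le_tsum fun k =>
              mul_le_mul_left (peetre_ennreal s' hs' l k) _
        _ = ∑' k : ℤ, c0 * ((F (l - k) * g k) + (f (l - k) * G k)) := by
            refine tsum_congr fun k => ?_
            rw [hFdef, hGdef]
            dsimp only
            ring
        _ = c0 * ((∑' k : ℤ, F (l - k) * g k) + (∑' k : ℤ, f (l - k) * G k)) := by
            rw [ENNReal.tsum_mul_left, ENNReal.tsum_add]
        _ = c0 * ((∑' k : ℤ, F (l - k) * g k) + (∑' k : ℤ, G (l - k) * f k)) := by
            rw [tsum_conv_comm f G l]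
    calc Wgt s' l * (∑' k : ℤ, f (l - k) * g k) ^ 2
        = (σ l * ∑' k : ℤ, f (l - k) * g k) ^ 2 := by rw [mul_pow, hσsq]
      _ ≤ (c0 * ((∑' k : ℤ, F (l - k) * g k) + (∑' k : ℤ, G (l - k) * f k))) ^ 2 := by
          gcongr
      _ = c0 ^ 2 * ((∑' k : ℤ, F (l - k) * g k) + (∑' k : ℤ, G (l - k) * f k)) ^ 2 :=
          mul_pow _ _ _
      _ ≤ c0 ^ 2 * (2 * ((∑' k : ℤ, F (l - k) * g k) ^ 2 + (∑' k : ℤ, G (l - k) * f k) ^ 2)) :=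
          mul_le_mul_right (sq_add_le _ _) _
  have hFsum : (∑' k : ℤ, F k ^ 2) = ∑' l, Wgt s' l * f l ^ 2 :=
    tsum_congr fun k => by rw [hFdef]; dsimp only; rw [mul_pow, hσsq]
  have hGsum : (∑' k : ℤ, G k ^ 2) = ∑' l, Wgt s' l * g l ^ 2 :=
    tsum_congr fun k => by rw [hGdef]; dsimp only; rw [mul_pow, hσsq]
  calc (∑' l : ℤ, Wgt s' l * (∑' k : ℤ, f (l - k) * g k) ^ 2)
      ≤ ∑' l : ℤ, c0 ^ 2 * (2 * ((∑' k : ℤ, F (l - k) * g k) ^ 2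
          + (∑' k : ℤ, G (l - k) * f k) ^ 2)) := ENNReal.tsum_le_tsum hpt
    _ = 2 * c0 ^ 2 * ((∑' l : ℤ, (∑' k : ℤ, F (l - k) * g k) ^ 2)
          + (∑' l : ℤ, (∑' k : ℤ, G (l - k) * f k) ^ 2)) := by
        rw [ENNReal.tsum_mul_left]
        conv_lhs => rw [ENNReal.tsum_mul_left]
        rw [ENNReal.tsum_add]
        ring
    _ ≤ 2 * c0 ^ 2 * ((∑' k : ℤ, F k ^ 2) * (∑' k : ℤ, g k) ^ 2
          + (∑' k : ℤ, G k ^ 2) * (∑' k : ℤ, f k) ^ 2) :=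
        mul_le_mul_right (add_le_add (young F g) (young G f)) _
    _ ≤ 2 * c0 ^ 2 * ((∑' k : ℤ, F k ^ 2) * (A * ∑' k : ℤ, Wgt s k * g k ^ 2)
          + (∑' k : ℤ, G k ^ 2) * (A * ∑' k : ℤ, Wgt s k * f k ^ 2)) := by
        refine mul_le_mul_right (add_le_add ?_ ?_) _
        · exact mul_le_mul_right (ell1_sq_le s g) _
        · exact mul_le_mul_right (ell1_sq_le s f) _
    _ = 2 * c0 ^ 2 * A * ((∑' l, Wgt s' l * f l ^ 2) * (∑' l, Wgt s l * g l ^ 2)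
          + (∑' l, Wgt s l * f l ^ 2) * (∑' l, Wgt s' l * g l ^ 2)) := by
        rw [hFsum, hGsum]
        ring

end Stmt17Aux

open Stmt17Aux in
/-- Moser–Nirenberg tame product estimate (formula (2.1) of Lemma 8.1):
for `s > 1/2`, `s' ≥ 0`, there is `C = C(s, s') > 0` with
`‖u⋆v‖_{s'} ≤ C(‖u‖_s‖v‖_{s'} + ‖u‖_{s'}‖v‖_s)`. -/
theorem stmt_17 (s s' : ℝ) (hs : 1 / 2 < s) (hs' : 0 ≤ s') :
    ∃ C : ℝ, 0 < C ∧
      ∀ (B : Type) [NormedRing B], ∀ u v : ℤ → B,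
        Summable (fun l : ℤ => (1 + |(l : ℝ)| ^ (2 * s)) * ‖u l‖ ^ 2) →
        Summable (fun l : ℤ => (1 + |(l : ℝ)| ^ (2 * s')) * ‖u l‖ ^ 2) →
        Summable (fun l : ℤ => (1 + |(l : ℝ)| ^ (2 * s)) * ‖v l‖ ^ 2) →
        Summable (fun l : ℤ => (1 + |(l : ℝ)| ^ (2 * s')) * ‖v l‖ ^ 2) →
        (∀ l : ℤ, Summable (fun k : ℤ => ‖u (l - k)‖ * ‖v k‖)) ∧
        Summable (fun l : ℤ =>
          (1 + |(l : ℝ)| ^ (2 * s')) * ‖∑' k : ℤ, u (l - k) * v k‖ ^ 2) ∧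
        Real.sqrt (∑' l : ℤ,
            (1 + |(l : ℝ)| ^ (2 * s')) * ‖∑' k : ℤ, u (l - k) * v k‖ ^ 2) ≤
          C * (Real.sqrt (∑' l : ℤ, (1 + |(l : ℝ)| ^ (2 * s)) * ‖u l‖ ^ 2) *
                Real.sqrt (∑' l : ℤ, (1 + |(l : ℝ)| ^ (2 * s')) * ‖v l‖ ^ 2) +
              Real.sqrt (∑' l : ℤ, (1 + |(l : ℝ)| ^ (2 * s')) * ‖u l‖ ^ 2) *
                Real.sqrt (∑' l : ℤ, (1 + |(l : ℝ)| ^ (2 * s)) * ‖v l‖ ^ 2)) := by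
  classical
  have hAsum := summable_inv_weight hs
  set A : ℝ≥0∞ := ∑' k : ℤ, ENNReal.ofReal (((1:ℝ) + |(k:ℝ)| ^ (2 * s))⁻¹) with hAdef
  have hAne : A ≠ ⊤ := by
    rw [hAdef, ← ENNReal.ofReal_tsum_of_nonneg (fun k => by positivity) hAsum]
    exact ENNReal.ofReal_ne_top
  have hApos : 0 < A := by
    have h0 : (0:ℝ≥0∞) < ENNReal.ofReal (((1:ℝ) + |((0:ℤ):ℝ)| ^ (2 * s))⁻¹) :=
      ENNReal.ofReal_pos.mpr (by positivity)
    exact h0.trans_le (ENNReal.le_tsum 0)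
  set c0 : ℝ≥0∞ := ENNReal.ofReal ((2:ℝ) ^ s') with hc0def
  have hc0pos : 0 < c0 := ENNReal.ofReal_pos.mpr (Real.rpow_pos_of_pos (by norm_num) s')
  have hc0ne : c0 ≠ ⊤ := ENNReal.ofReal_ne_top
  set K : ℝ≥0∞ := 2 * c0 ^ 2 * A with hKdef
  have hKne : K ≠ ⊤ := by
    rw [hKdef]
    exact ENNReal.mul_ne_top (ENNReal.mul_ne_top ENNReal.ofNat_ne_top
      (ENNReal.pow_ne_top hc0ne)) hAne
  have hKpos : 0 < K := by
    rw [hKdef]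
    refine ENNReal.mul_pos (mul_ne_zero two_ne_zero (pow_ne_zero 2 hc0pos.ne')) hApos.ne'
  clear_value A c0 K
  refine ⟨Real.sqrt K.toReal, Real.sqrt_pos.mpr (ENNReal.toReal_pos hKpos.ne' hKne), ?_⟩
  intro B _ u v hu_s hu_s' hv_s hv_s'
  -- `ℝ≥0∞`-versions of the four weighted sums
  have hU_s : (∑' l : ℤ, Wgt s l * (‖u l‖₊ : ℝ≥0∞) ^ 2)
      = ENNReal.ofReal (∑' l : ℤ, (1 + |(l : ℝ)| ^ (2 * s)) * ‖u l‖ ^ 2) :=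
    tsum_ofReal_eq _ (wgt_nonneg s) u hu_s
  have hU_s' : (∑' l : ℤ, Wgt s' l * (‖u l‖₊ : ℝ≥0∞) ^ 2)
      = ENNReal.ofReal (∑' l : ℤ, (1 + |(l : ℝ)| ^ (2 * s')) * ‖u l‖ ^ 2) :=
    tsum_ofReal_eq _ (wgt_nonneg s') u hu_s'
  have hV_s : (∑' l : ℤ, Wgt s l * (‖v l‖₊ : ℝ≥0∞) ^ 2)
      = ENNReal.ofReal (∑' l : ℤ, (1 + |(l : ℝ)| ^ (2 * s)) * ‖v l‖ ^ 2) :=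
    tsum_ofReal_eq _ (wgt_nonneg s) v hv_s
  have hV_s' : (∑' l : ℤ, Wgt s' l * (‖v l‖₊ : ℝ≥0∞) ^ 2)
      = ENNReal.ofReal (∑' l : ℤ, (1 + |(l : ℝ)| ^ (2 * s')) * ‖v l‖ ^ 2) :=
    tsum_ofReal_eq _ (wgt_nonneg s') v hv_s'
  -- unweighted sums are finite
  have hone_le : ∀ (r : ℝ) (l : ℤ), (1:ℝ≥0∞) ≤ Wgt r l := fun r l =>
    ENNReal.one_le_ofReal.mpr (by nlinarith [Real.rpow_nonneg (abs_nonneg ((l:ℝ))) (2*r)])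
  have hu2 : (∑' k : ℤ, (‖u k‖₊ : ℝ≥0∞) ^ 2) ≤ ∑' l : ℤ, Wgt s l * (‖u l‖₊ : ℝ≥0∞) ^ 2 := by
    refine ENNReal.tsum_le_tsum fun k => ?_
    conv_lhs => rw [← one_mul ((‖u k‖₊ : ℝ≥0∞) ^ 2)]
    exact mul_le_mul_left (hone_le s k) _
  have hv2 : (∑' k : ℤ, (‖v k‖₊ : ℝ≥0∞) ^ 2) ≤ ∑' l : ℤ, Wgt s l * (‖v l‖₊ : ℝ≥0∞) ^ 2 := by
    refine ENNReal.tsum_le_tsum fun k => ?_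
    conv_lhs => rw [← one_mul ((‖v k‖₊ : ℝ≥0∞) ^ 2)]
    exact mul_le_mul_left (hone_le s k) _
  have hu2ne : (∑' k : ℤ, (‖u k‖₊ : ℝ≥0∞) ^ 2) ≠ ⊤ :=
    ne_top_of_le_ne_top (by rw [hU_s]; exact ENNReal.ofReal_ne_top) hu2
  have hv2ne : (∑' k : ℤ, (‖v k‖₊ : ℝ≥0∞) ^ 2) ≠ ⊤ :=
    ne_top_of_le_ne_top (by rw [hV_s]; exact ENNReal.ofReal_ne_top) hv2
  -- finiteness of the convolution sums
  have hS_ne : ∀ l : ℤ, (∑' k : ℤ, (‖u (l - k)‖₊ : ℝ≥0∞) * (‖v k‖₊ : ℝ≥0∞)) ≠ ⊤ := by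
    intro l
    have hcs : (∑' k : ℤ, (‖u (l - k)‖₊ : ℝ≥0∞) * (‖v k‖₊ : ℝ≥0∞)) ^ 2
        ≤ (∑' k : ℤ, ((‖u (l - k)‖₊ : ℝ≥0∞)) ^ 2) * (∑' k : ℤ, ((‖v k‖₊ : ℝ≥0∞)) ^ 2) :=
      cauchy_schwarz _ _
    have hre : (∑' k : ℤ, ((‖u (l - k)‖₊ : ℝ≥0∞)) ^ 2) = ∑' k : ℤ, ((‖u k‖₊ : ℝ≥0∞)) ^ 2 :=
      tsum_reflect (fun k => ((‖u k‖₊ : ℝ≥0∞)) ^ 2) l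
    rw [hre] at hcs
    intro htop
    rw [htop] at hcs
    have h2top : ((⊤:ℝ≥0∞)) ^ 2 = ⊤ := by simp
    rw [h2top] at hcs
    exact (ENNReal.mul_ne_top hu2ne hv2ne) (top_le_iff.mp hcs)
  -- first bullet
  have part1 : ∀ l : ℤ, Summable fun k : ℤ => ‖u (l - k)‖ * ‖v k‖ := by
    intro l
    have h2 := ENNReal.summable_toReal (hS_ne l)
    refine h2.congr fun k => ?_
    simp [ENNReal.toReal_mul]
  -- the convolution is controlled by the `ℝ≥0∞` convolution of the norms
  have hconv : ∀ l : ℤ, ((‖∑' k : ℤ, u (l - k) * v k‖₊ : ℝ≥0∞))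
      ≤ ∑' k : ℤ, (‖u (l - k)‖₊ : ℝ≥0∞) * (‖v k‖₊ : ℝ≥0∞) := by
    intro l
    by_cases hc : Summable fun k : ℤ => u (l - k) * v k
    · have hn : Summable fun k : ℤ => ‖u (l - k) * v k‖ :=
        Summable.of_nonneg_of_le (fun _ => norm_nonneg _) (fun k => norm_mul_le _ _) (part1 l)
      have h1 : ‖∑' k : ℤ, u (l - k) * v k‖ ≤ ∑' k : ℤ, ‖u (l - k) * v k‖ :=
        norm_tsum_le _ hn
      calc ((‖∑' k : ℤ, u (l - k) * v k‖₊ : ℝ≥0∞))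
          = ENNReal.ofReal ‖∑' k : ℤ, u (l - k) * v k‖ :=
            (by rw [ofReal_norm, enorm_eq_nnnorm])
        _ ≤ ENNReal.ofReal (∑' k : ℤ, ‖u (l - k) * v k‖) := ENNReal.ofReal_le_ofReal h1
        _ = ∑' k : ℤ, ENNReal.ofReal ‖u (l - k) * v k‖ :=
            ENNReal.ofReal_tsum_of_nonneg (fun _ => norm_nonneg _) hn
        _ ≤ ∑' k : ℤ, (‖u (l - k)‖₊ : ℝ≥0∞) * (‖v k‖₊ : ℝ≥0∞) := by
            refine ENNReal.tsum_le_tsum fun k => ?_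
            rw [ofReal_norm, enorm_eq_nnnorm, ← ENNReal.coe_mul]
            exact ENNReal.coe_le_coe.mpr (nnnorm_mul_le _ _)
    · rw [tsum_eq_zero_of_not_summable hc]
      simp
  -- the main `ℝ≥0∞` estimate
  have hmain : (∑' l : ℤ, Wgt s' l * ((‖∑' k : ℤ, u (l - k) * v k‖₊ : ℝ≥0∞)) ^ 2)
      ≤ K * ((∑' l : ℤ, Wgt s' l * (‖u l‖₊ : ℝ≥0∞) ^ 2)
              * (∑' l : ℤ, Wgt s l * (‖v l‖₊ : ℝ≥0∞) ^ 2)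
            + (∑' l : ℤ, Wgt s l * (‖u l‖₊ : ℝ≥0∞) ^ 2)
              * (∑' l : ℤ, Wgt s' l * (‖v l‖₊ : ℝ≥0∞) ^ 2)) := by
    calc (∑' l : ℤ, Wgt s' l * ((‖∑' k : ℤ, u (l - k) * v k‖₊ : ℝ≥0∞)) ^ 2)
        ≤ ∑' l : ℤ, Wgt s' l
            * (∑' k : ℤ, (‖u (l - k)‖₊ : ℝ≥0∞) * (‖v k‖₊ : ℝ≥0∞)) ^ 2 := by
          refine ENNReal.tsum_le_tsum fun l => ?_
          gcongr
          exact hconv l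
      _ ≤ 2 * ENNReal.ofReal ((2:ℝ) ^ s') ^ 2
            * (∑' k : ℤ, ENNReal.ofReal (((1:ℝ) + |(k:ℝ)| ^ (2 * s))⁻¹))
            * ((∑' l : ℤ, Wgt s' l * (‖u l‖₊ : ℝ≥0∞) ^ 2)
                * (∑' l : ℤ, Wgt s l * (‖v l‖₊ : ℝ≥0∞) ^ 2)
              + (∑' l : ℤ, Wgt s l * (‖u l‖₊ : ℝ≥0∞) ^ 2)
                * (∑' l : ℤ, Wgt s' l * (‖v l‖₊ : ℝ≥0∞) ^ 2)) :=
          core s s' hs' (fun k => (‖u k‖₊ : ℝ≥0∞)) (fun k => (‖v k‖₊ : ℝ≥0∞))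
      _ = K * _ := by rw [hKdef, hc0def, hAdef]
  -- finiteness of the right-hand side
  have hRHSne : K * ((∑' l : ℤ, Wgt s' l * (‖u l‖₊ : ℝ≥0∞) ^ 2)
        * (∑' l : ℤ, Wgt s l * (‖v l‖₊ : ℝ≥0∞) ^ 2)
      + (∑' l : ℤ, Wgt s l * (‖u l‖₊ : ℝ≥0∞) ^ 2)
        * (∑' l : ℤ, Wgt s' l * (‖v l‖₊ : ℝ≥0∞) ^ 2)) ≠ ⊤ := by
    refine ENNReal.mul_ne_top hKne (ENNReal.add_ne_top.mpr ⟨?_, ?_⟩)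
    · exact ENNReal.mul_ne_top (by rw [hU_s']; exact ENNReal.ofReal_ne_top)
        (by rw [hV_s]; exact ENNReal.ofReal_ne_top)
    · exact ENNReal.mul_ne_top (by rw [hU_s]; exact ENNReal.ofReal_ne_top)
        (by rw [hV_s']; exact ENNReal.ofReal_ne_top)
  have hNne : (∑' l : ℤ, Wgt s' l * ((‖∑' k : ℤ, u (l - k) * v k‖₊ : ℝ≥0∞)) ^ 2) ≠ ⊤ :=
    ne_top_of_le_ne_top hRHSne hmain
  -- second bullet
  have part2 : Summable fun l : ℤ =>
      (1 + |(l : ℝ)| ^ (2 * s')) * ‖∑' k : ℤ, u (l - k) * v k‖ ^ 2 :=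
    summable_of_ne_top _ (wgt_nonneg s') _ hNne
  have hNval : (∑' l : ℤ, Wgt s' l * ((‖∑' k : ℤ, u (l - k) * v k‖₊ : ℝ≥0∞)) ^ 2)
      = ENNReal.ofReal (∑' l : ℤ,
          (1 + |(l : ℝ)| ^ (2 * s')) * ‖∑' k : ℤ, u (l - k) * v k‖ ^ 2) :=
    tsum_ofReal_eq _ (wgt_nonneg s') _ part2
  refine ⟨part1, part2, ?_⟩
  -- real arithmetic
  set Z : ℝ := ∑' l : ℤ, (1 + |(l : ℝ)| ^ (2 * s')) * ‖∑' k : ℤ, u (l - k) * v k‖ ^ 2 with hZ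
  set X : ℝ := ∑' l : ℤ, (1 + |(l : ℝ)| ^ (2 * s)) * ‖u l‖ ^ 2 with hX
  set X' : ℝ := ∑' l : ℤ, (1 + |(l : ℝ)| ^ (2 * s')) * ‖u l‖ ^ 2 with hX'
  set Y : ℝ := ∑' l : ℤ, (1 + |(l : ℝ)| ^ (2 * s)) * ‖v l‖ ^ 2 with hY
  set Y' : ℝ := ∑' l : ℤ, (1 + |(l : ℝ)| ^ (2 * s')) * ‖v l‖ ^ 2 with hY'
  have hZnn : 0 ≤ Z := tsum_nonneg fun l => mul_nonneg (wgt_nonneg s' l) (sq_nonneg _)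
  have hXnn : 0 ≤ X := tsum_nonneg fun l => mul_nonneg (wgt_nonneg s l) (sq_nonneg _)
  have hX'nn : 0 ≤ X' := tsum_nonneg fun l => mul_nonneg (wgt_nonneg s' l) (sq_nonneg _)
  have hYnn : 0 ≤ Y := tsum_nonneg fun l => mul_nonneg (wgt_nonneg s l) (sq_nonneg _)
  have hY'nn : 0 ≤ Y' := tsum_nonneg fun l => mul_nonneg (wgt_nonneg s' l) (sq_nonneg _)
  have hle : Z ≤ K.toReal * (X * Y' + X' * Y) := by
    calc Z = (∑' l : ℤ, Wgt s' l * ((‖∑' k : ℤ, u (l - k) * v k‖₊ : ℝ≥0∞)) ^ 2).toReal := by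
          rw [hNval, ENNReal.toReal_ofReal hZnn]
      _ ≤ (K * ((∑' l : ℤ, Wgt s' l * (‖u l‖₊ : ℝ≥0∞) ^ 2)
              * (∑' l : ℤ, Wgt s l * (‖v l‖₊ : ℝ≥0∞) ^ 2)
            + (∑' l : ℤ, Wgt s l * (‖u l‖₊ : ℝ≥0∞) ^ 2)
              * (∑' l : ℤ, Wgt s' l * (‖v l‖₊ : ℝ≥0∞) ^ 2))).toReal :=
          ENNReal.toReal_mono hRHSne hmain
      _ = K.toReal * (X * Y' + X' * Y) := by
          rw [hU_s, hU_s', hV_s, hV_s']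
          rw [ENNReal.toReal_mul, ENNReal.toReal_add
            (ENNReal.mul_ne_top ENNReal.ofReal_ne_top ENNReal.ofReal_ne_top)
            (ENNReal.mul_ne_top ENNReal.ofReal_ne_top ENNReal.ofReal_ne_top),
            ENNReal.toReal_mul, ENNReal.toReal_mul,
            ENNReal.toReal_ofReal hXnn, ENNReal.toReal_ofReal hX'nn,
            ENNReal.toReal_ofReal hYnn, ENNReal.toReal_ofReal hY'nn]
          ring
  calc Real.sqrt Z ≤ Real.sqrt (K.toReal * (X * Y' + X' * Y)) := Real.sqrt_le_sqrt hle
    _ = Real.sqrt K.toReal * Real.sqrt (X * Y' + X' * Y) :=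
        Real.sqrt_mul ENNReal.toReal_nonneg _
    _ ≤ Real.sqrt K.toReal * (Real.sqrt (X * Y') + Real.sqrt (X' * Y)) :=
        mul_le_mul_of_nonneg_left
          (sqrt_add_le (mul_nonneg hXnn hY'nn) (mul_nonneg hX'nn hYnn))
          (Real.sqrt_nonneg _)
    _ = Real.sqrt K.toReal * (Real.sqrt X * Real.sqrt Y'
          + Real.sqrt X' * Real.sqrt Y) := by
        rw [Real.sqrt_mul hXnn, Real.sqrt_mul hX'nn]
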